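/- Let H be a Hopf algebra over a field k and I ⊆ H a Hopf ideal such that B := H^{co H/I} ⊆ H is a homogeneous quotient-Hopf–Galois extension. Then the map φ₀: [H]_B → (H/I) ⊗_H ad(H), [h]_B ↦ π(1) ⊗_H h, is a bijection which is left H/I-linear, where H/I acts on [H]_B by the Miyashita–Ulbrich action π(h) ▷ [h']_B := [h(2) h' S(h(1))]_B and on (H/I) ⊗_H ad(H) through the algebra projection H → H/I acting by left multiplication on the first tensor factor. Consequently the functors − ⊗_{H/I} [ad(H)]_B and − ⊗_H ad(H) on right H/I-modules are naturally isomorphic. -/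

import Mathlib

/-!
STATEMENT 13 (comparison with the Jara–Ştefan isomorphism):  Let `I ⊆ H` be a Hopf ideal such
that `B = H^{co H/I} ⊆ H` is a homogeneous quotient-Hopf–Galois extension.  Then
`φ₀ : [H]_B → (H/I) ⊗_H ad(H)`, `[h]_B ↦ π(1) ⊗_H h`, is a bijection which is left
`H/I`-linear for the Miyashita–Ulbrich action `π(h) ▷ [h']_B = [h₍₂₎h'S(h₍₁₎)]_B` on the source
and left multiplication on the first tensor factor on the target.  Consequently the functors
`- ⊗_{H/I} [ad(H)]_B` and `- ⊗_H ad(H)` are naturally isomorphic: for every right `H/I`-module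
`N` (a right `H`-module killing `I`) the canonical comparison of the two tensor products is a
linear bijection.
-/

open TensorProduct

noncomputable section

universe u

variable (k : Type u) [Field k] (H : Type u) [Ring H] [HopfAlgebra k H]

/-- `b ∈ B = H^{co H/I}`:  `b₍₁₎ ⊗ π(b₍₂₎) = b ⊗ π(1)`. -/
def IsCoinvariant (I : Submodule k H) (b : H) : Prop :=
  (LinearMap.lTensor H I.mkQ) (Coalgebra.comul (R := k) b) = b ⊗ₜ[k] I.mkQ 1

/-- `I` is a Hopf ideal of `H`. -/
def IsHopfIdeal (I : Submodule k H) : Prop :=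
  (∀ x ∈ I, ∀ h : H, x * h ∈ I) ∧
  (∀ x ∈ I, ∀ h : H, h * x ∈ I) ∧
  (∀ x ∈ I, Coalgebra.counit (R := k) x = (0 : k)) ∧
  (∀ x ∈ I, Coalgebra.comul (R := k) x ∈
    LinearMap.range (TensorProduct.map I.subtype (LinearMap.id (M := H))) ⊔
      LinearMap.range (TensorProduct.map (LinearMap.id (M := H)) I.subtype)) ∧
  (∀ x ∈ I, HopfAlgebra.antipode (R := k) x ∈ I)

/-- the left adjoint action `adAct (h ⊗ m) = h₍₂₎ * m * S(h₍₁₎)` as a linear map. -/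
def adAct : H ⊗[k] H →ₗ[k] H :=
  (LinearMap.mul' k H).comp
    ((TensorProduct.comm k H H).toLinearMap.comp
      ((LinearMap.lTensor H (LinearMap.mul' k H)).comp
        ((TensorProduct.assoc k H H H).toLinearMap.comp
          ((LinearMap.rTensor H (LinearMap.rTensor H (HopfAlgebra.antipode (R := k)))).comp
            (LinearMap.rTensor H (Coalgebra.comul (R := k)))))))

/-- commutators `[H, B]`, whose quotient is `[H]_B = H/[H,B]`. -/
def commB (I : Submodule k H) : Submodule k H :=
  Submodule.span k {x : H | ∃ h b : H, IsCoinvariant k H I b ∧ x = h * b - b * h}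

/-- the `⊗_H`-relations of `(H/I) ⊗_H ad(H)` inside `(H/I) ⊗ H` (on representatives). -/
def relAdZero (I : Submodule k H) : Submodule k ((H ⧸ I) ⊗[k] H) :=
  Submodule.span k
    {x | ∃ v p m : H,
      x = I.mkQ (v * p) ⊗ₜ[k] m - I.mkQ v ⊗ₜ[k] (adAct k H (p ⊗ₜ[k] m))}

/-- the relations of `N ⊗_{H/I} [ad(H)]_B` inside `N ⊗ H`, for a right `H/I`-module `N`
with action `r`: the `⊗`-balance over `H/I` acting by the Miyashita–Ulbrich action on
`[ad(H)]_B`, together with the `B`-commutator relations. -/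
def relMU (N : Type u) [AddCommGroup N] [Module k N] (r : N →ₗ[k] H →ₗ[k] N)
    (I : Submodule k H) : Submodule k (N ⊗[k] H) :=
  Submodule.span k
    ({x | ∃ (n : N) (p m : H), x = (r n p) ⊗ₜ[k] m - n ⊗ₜ[k] (adAct k H (p ⊗ₜ[k] m))} ∪
     {x | ∃ (n : N) (m b : H), IsCoinvariant k H I b ∧ x = n ⊗ₜ[k] (m * b - b * m)})

/-- the relations of `N ⊗_H ad(H)` inside `N ⊗ H`. -/
def relH (N : Type u) [AddCommGroup N] [Module k N] (r : N →ₗ[k] H →ₗ[k] N) :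
    Submodule k (N ⊗[k] H) :=
  Submodule.span k
    {x | ∃ (n : N) (p m : H), x = (r n p) ⊗ₜ[k] m - n ⊗ₜ[k] (adAct k H (p ⊗ₜ[k] m))}

end

/-! ### Auxiliary development -/

noncomputable section

open Coalgebra HopfAlgebra LinearMap

variable {k : Type u} [Field k] {H : Type u} [Ring H] [HopfAlgebra k H]

local notation "S" => HopfAlgebra.antipode (R := k) (A := H)

lemma sum_counit_smul' {a : H} {ι : Type*} (r : Coalgebra.Repr k a ι) :
    ∑ i ∈ r.index, Coalgebra.counit (R := k) (r.left i) • r.right i = a := by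
  have h2 := congrArg (TensorProduct.lid k H) (Coalgebra.sum_counit_tmul_eq r)
  rw [map_sum] at h2
  simp only [TensorProduct.lid_tmul] at h2
  rw [h2]; exact one_smul k a

lemma sum_smul_counit' {a : H} {ι : Type*} (r : Coalgebra.Repr k a ι) :
    ∑ i ∈ r.index, Coalgebra.counit (R := k) (r.right i) • r.left i = a := by
  have h2 := congrArg (TensorProduct.rid k H) (Coalgebra.sum_tmul_counit_eq r)
  rw [map_sum] at h2
  simp only [TensorProduct.rid_tmul] at h2
  rw [h2]; exact one_smul k a

/-- the one-element representation of `1` -/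
def oneRepr : Coalgebra.Repr k (1 : H) Unit :=
  ⟨(Finset.univ : Finset Unit), fun _ => 1, fun _ => 1, by
    simp [Bialgebra.comul_one, Algebra.TensorProduct.one_def]⟩

lemma antipode_one' : S 1 = 1 := by
  have := HopfAlgebra.sum_antipode_mul_eq_algebraMap_counit (R := k) (oneRepr (k := k) (H := H))
  simpa [oneRepr] using this

/-- the product representation -/
def prodRepr {a b : H} {ι κ : Type*} (ra : Coalgebra.Repr k a ι) (rb : Coalgebra.Repr k b κ) :
    Coalgebra.Repr k (a * b) (ι × κ) where
  index := ra.index ×ˢ rb.index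
  left := fun p => ra.left p.1 * rb.left p.2
  right := fun p => ra.right p.1 * rb.right p.2
  eq := by
    rw [Bialgebra.comul_mul, ← ra.eq, ← rb.eq, Finset.sum_mul_sum, Finset.sum_product]
    simp [Algebra.TensorProduct.tmul_mul_tmul]

lemma adAct_tmul (p n : H) {ι : Type*} (r : Coalgebra.Repr k p ι) :
    adAct k H (p ⊗ₜ[k] n) = ∑ i ∈ r.index, r.right i * n * S (r.left i) := by
  simp only [adAct, LinearMap.comp_apply]
  rw [LinearMap.rTensor_tmul, ← r.eq, TensorProduct.sum_tmul]
  rw [map_sum, map_sum, map_sum, map_sum, map_sum]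
  refine Finset.sum_congr rfl fun i _ => ?_
  simp [LinearMap.mul'_apply, mul_assoc]

lemma adAct_one_tmul (n : H) : adAct k H ((1 : H) ⊗ₜ[k] n) = n := by
  rw [adAct_tmul 1 n oneRepr]
  simp [oneRepr, antipode_one']

section AntipodeMul

def qMap : H ⊗[k] H →ₗ[k] H :=
  (LinearMap.mul' k H) ∘ₗ (TensorProduct.map S S) ∘ₗ (TensorProduct.comm k H H).toLinearMap

def thetaMap : (H ⊗[k] H) ⊗[k] (H ⊗[k] H) →ₗ[k] H :=
  (LinearMap.mul' k H) ∘ₗ (TensorProduct.map (LinearMap.mul' k H) qMap) ∘ₗ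
    (TensorProduct.tensorTensorTensorComm k H H H H).toLinearMap

def psiMap : (H ⊗[k] (H ⊗[k] H)) ⊗[k] (H ⊗[k] (H ⊗[k] H)) →ₗ[k] H :=
  (LinearMap.mul' k H) ∘ₗ
    (TensorProduct.map ((HopfAlgebra.antipode (R := k)) ∘ₗ (LinearMap.mul' k H)) thetaMap) ∘ₗ
    (TensorProduct.tensorTensorTensorComm k H (H ⊗[k] H) H (H ⊗[k] H)).toLinearMap

@[simp] lemma psiMap_tmul (a₁ a₂ a₃ b₁ b₂ b₃ : H) :
    psiMap ((a₁ ⊗ₜ[k] (a₂ ⊗ₜ[k] a₃)) ⊗ₜ[k] (b₁ ⊗ₜ[k] (b₂ ⊗ₜ[k] b₃))) =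
      S (a₁ * b₁) * ((a₂ * b₂) * (S b₃ * S a₃)) := by
  simp [psiMap, thetaMap, qMap, TensorProduct.tensorTensorTensorComm_tmul,
    LinearMap.mul'_apply]

lemma helper1 (c w u : H) {d : H} {ι : Type*} (r : Coalgebra.Repr k d ι) :
    ∑ q ∈ r.index, c * ((w * r.left q) * (S (r.right q) * u)) =
      Coalgebra.counit (R := k) d • (c * (w * u)) := by
  have : ∀ q, c * ((w * r.left q) * (S (r.right q) * u)) =
      c * (w * ((r.left q * S (r.right q)) * u)) := fun q => by
    rw [mul_assoc w, mul_assoc (r.left q), ← mul_assoc (r.left q)]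
  simp only [this]
  rw [← Finset.mul_sum, ← Finset.mul_sum, ← Finset.sum_mul,
    HopfAlgebra.sum_mul_antipode_eq_smul (R := k) r]
  rw [smul_mul_assoc, one_mul, mul_smul_comm, mul_smul_comm]

lemma helper2 (α X : H) {b : H} {ι : Type*} (rb : Coalgebra.Repr k b ι) :
    ∑ j ∈ rb.index, Coalgebra.counit (R := k) (rb.right j) • (S (α * rb.left j) * X) =
      S (α * b) * X := by
  have : ∀ j, Coalgebra.counit (R := k) (rb.right j) • (S (α * rb.left j) * X) =
      (S (α * (Coalgebra.counit (R := k) (rb.right j) • rb.left j))) * X := fun j => by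
    rw [mul_smul_comm, map_smul, smul_mul_assoc]
  simp only [this]
  rw [← Finset.sum_mul]
  congr 1
  rw [← map_sum, ← Finset.mul_sum, sum_smul_counit' rb]

lemma antipode_mul' (a b : H) : S (a * b) = S b * S a := by
  classical
  set ra := Coalgebra.Repr.arbitrary k a
  set rb := Coalgebra.Repr.arbitrary k b
  set rla : ∀ i : H × H, Coalgebra.Repr k (ra.left i) (H × H) := fun i => Coalgebra.Repr.arbitrary k _
  set rra : ∀ i : H × H, Coalgebra.Repr k (ra.right i) (H × H) := fun i => Coalgebra.Repr.arbitrary k _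
  set rlb : ∀ j : H × H, Coalgebra.Repr k (rb.left j) (H × H) := fun j => Coalgebra.Repr.arbitrary k _
  set rrb : ∀ j : H × H, Coalgebra.Repr k (rb.right j) (H × H) := fun j => Coalgebra.Repr.arbitrary k _
  have bridgea := Coalgebra.sum_tmul_tmul_eq (R := k) ra rla rra
  have bridgeb := Coalgebra.sum_tmul_tmul_eq (R := k) rb rlb rrb
  set Tar : H ⊗[k] (H ⊗[k] H) :=
    ∑ i ∈ ra.index, ∑ p ∈ (rra i).index,
      ra.left i ⊗ₜ[k] ((rra i).left p ⊗ₜ[k] (rra i).right p) with hTar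
  set Tbr : H ⊗[k] (H ⊗[k] H) :=
    ∑ j ∈ rb.index, ∑ q ∈ (rrb j).index,
      rb.left j ⊗ₜ[k] ((rrb j).left q ⊗ₜ[k] (rrb j).right q) with hTbr
  have evalr : psiMap (Tar ⊗ₜ[k] Tbr) = S (a * b) := by
    rw [hTar, hTbr]
    rw [TensorProduct.sum_tmul]
    rw [map_sum]
    calc ∑ i ∈ ra.index, psiMap ((∑ p ∈ (rra i).index,
            ra.left i ⊗ₜ[k] ((rra i).left p ⊗ₜ[k] (rra i).right p)) ⊗ₜ[k] Tbr)
        = ∑ i ∈ ra.index, ∑ p ∈ (rra i).index, ∑ j ∈ rb.index, ∑ q ∈ (rrb j).index,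
            S (ra.left i * rb.left j) *
              ((rra i).left p * (rrb j).left q *
                (S ((rrb j).right q) * S ((rra i).right p))) := by
          refine Finset.sum_congr rfl fun i _ => ?_
          rw [TensorProduct.sum_tmul, map_sum]
          refine Finset.sum_congr rfl fun p _ => ?_
          rw [TensorProduct.tmul_sum, map_sum]
          refine Finset.sum_congr rfl fun j _ => ?_
          rw [TensorProduct.tmul_sum, map_sum]
          refine Finset.sum_congr rfl fun q _ => psiMap_tmul _ _ _ _ _ _
      _ = ∑ i ∈ ra.index, ∑ p ∈ (rra i).index, ∑ j ∈ rb.index,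
            Coalgebra.counit (R := k) (rb.right j) •
              (S (ra.left i * rb.left j) * ((rra i).left p * S ((rra i).right p))) := by
          refine Finset.sum_congr rfl fun i _ => Finset.sum_congr rfl fun p _ =>
            Finset.sum_congr rfl fun j _ => helper1 _ _ _ (rrb j)
      _ = ∑ i ∈ ra.index, ∑ p ∈ (rra i).index,
            S (ra.left i * b) * ((rra i).left p * S ((rra i).right p)) := by
          refine Finset.sum_congr rfl fun i _ => Finset.sum_congr rfl fun p _ => ?_
          exact helper2 _ _ rb
      _ = ∑ i ∈ ra.index,
            Coalgebra.counit (R := k) (ra.right i) • S (ra.left i * b) := by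
          refine Finset.sum_congr rfl fun i _ => ?_
          rw [← Finset.mul_sum, HopfAlgebra.sum_mul_antipode_eq_smul (R := k) (rra i),
            mul_smul_comm, mul_one]
      _ = S (a * b) := by
          have : ∀ i, Coalgebra.counit (R := k) (ra.right i) • S (ra.left i * b) =
              S ((Coalgebra.counit (R := k) (ra.right i) • ra.left i) * b) := fun i => by
            rw [smul_mul_assoc, map_smul]
          simp only [this]
          rw [← map_sum, ← Finset.sum_mul, sum_smul_counit' ra]
  have evall : psiMap (Tar ⊗ₜ[k] Tbr) = S b * S a := by
    rw [← bridgea, ← bridgeb]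
    rw [TensorProduct.sum_tmul, map_sum]
    calc ∑ i ∈ ra.index, psiMap ((∑ t ∈ (rla i).index,
            (rla i).left t ⊗ₜ[k] ((rla i).right t ⊗ₜ[k] ra.right i)) ⊗ₜ[k]
            (∑ j ∈ rb.index, ∑ s ∈ (rlb j).index,
              (rlb j).left s ⊗ₜ[k] ((rlb j).right s ⊗ₜ[k] rb.right j)))
        = ∑ i ∈ ra.index, ∑ t ∈ (rla i).index, ∑ j ∈ rb.index, ∑ s ∈ (rlb j).index,
            S ((rla i).left t * (rlb j).left s) *
              ((rla i).right t * (rlb j).right s *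
                (S (rb.right j) * S (ra.right i))) := by
          refine Finset.sum_congr rfl fun i _ => ?_
          rw [TensorProduct.sum_tmul, map_sum]
          refine Finset.sum_congr rfl fun t _ => ?_
          rw [TensorProduct.tmul_sum, map_sum]
          refine Finset.sum_congr rfl fun j _ => ?_
          rw [TensorProduct.tmul_sum, map_sum]
          refine Finset.sum_congr rfl fun s _ => psiMap_tmul _ _ _ _ _ _
      _ = ∑ i ∈ ra.index, ∑ j ∈ rb.index,
            (Coalgebra.counit (R := k) (ra.left i) * Coalgebra.counit (R := k) (rb.left j)) •
              (S (rb.right j) * S (ra.right i)) := by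
          refine Finset.sum_congr rfl fun i _ => ?_
          rw [Finset.sum_comm]
          refine Finset.sum_congr rfl fun j _ => ?_
          have hgroup : ∀ t s, S ((rla i).left t * (rlb j).left s) *
              ((rla i).right t * (rlb j).right s * (S (rb.right j) * S (ra.right i))) =
              (S ((rla i).left t * (rlb j).left s) *
                ((rla i).right t * (rlb j).right s)) *
                (S (rb.right j) * S (ra.right i)) := fun t s => by
            rw [← mul_assoc]
          simp only [hgroup]
          simp only [← Finset.sum_mul]
          have hppp := HopfAlgebra.sum_antipode_mul_eq_smul (R := k)
            (prodRepr (rla i) (rlb j))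
          simp only [prodRepr] at hppp
          rw [Finset.sum_product] at hppp
          rw [hppp, Bialgebra.counit_mul, smul_mul_assoc, one_mul]
      _ = S b * S a := by
          have : ∀ i j, (Coalgebra.counit (R := k) (ra.left i) *
                Coalgebra.counit (R := k) (rb.left j)) •
              (S (rb.right j) * S (ra.right i)) =
              ((Coalgebra.counit (R := k) (rb.left j) • S (rb.right j)) *
                (Coalgebra.counit (R := k) (ra.left i) • S (ra.right i))) := fun i j => by
            rw [smul_mul_assoc, mul_smul_comm, smul_smul, mul_comm]
          simp only [this]
          have hsb : ∑ j ∈ rb.index,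
              Coalgebra.counit (R := k) (rb.left j) • S (rb.right j) = S b := by
            simp only [← map_smul]
            rw [← map_sum, sum_counit_smul' rb]
          have hsa : ∑ i ∈ ra.index,
              Coalgebra.counit (R := k) (ra.left i) • S (ra.right i) = S a := by
            simp only [← map_smul]
            rw [← map_sum, sum_counit_smul' ra]
          calc ∑ i ∈ ra.index, ∑ j ∈ rb.index,
                (Coalgebra.counit (R := k) (rb.left j) • S (rb.right j)) *
                  (Coalgebra.counit (R := k) (ra.left i) • S (ra.right i))
              = ∑ i ∈ ra.index,
                  S b * (Coalgebra.counit (R := k) (ra.left i) • S (ra.right i)) := by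
                refine Finset.sum_congr rfl fun i _ => ?_
                rw [← Finset.sum_mul, hsb]
            _ = S b * S a := by rw [← Finset.mul_sum, hsa]
  rw [← evalr, evall]

end AntipodeMul

lemma adAct_mul_tmul (v p m : H) :
    adAct k H ((v * p) ⊗ₜ[k] m) = adAct k H (v ⊗ₜ[k] adAct k H (p ⊗ₜ[k] m)) := by
  classical
  set rv := Coalgebra.Repr.arbitrary k v
  set rp := Coalgebra.Repr.arbitrary k p
  rw [adAct_tmul _ _ (prodRepr rv rp), adAct_tmul _ _ rv, adAct_tmul _ _ rp]
  simp only [prodRepr]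
  rw [Finset.sum_product]
  refine Finset.sum_congr rfl fun i _ => ?_
  rw [Finset.mul_sum, Finset.sum_mul]
  refine Finset.sum_congr rfl fun j _ => ?_
  rw [antipode_mul']
  simp [mul_assoc]

section XiMaps

def tri (m : H) : H →ₗ[k] H →ₗ[k] H →ₗ[k] H where
  toFun := fun x => LinearMap.mk₂ k (fun y z => z * (m * x) * S y)
    (fun y y' z => by simp [map_add, mul_add])
    (fun c y z => by simp [map_smul, mul_smul_comm])
    (fun y z z' => by simp [add_mul])
    (fun c y z => by simp [smul_mul_assoc])
  map_add' := fun x x' => by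
    apply LinearMap.ext; intro y; apply LinearMap.ext; intro z
    simp [mul_add, add_mul]
  map_smul' := fun c x => by
    apply LinearMap.ext; intro y; apply LinearMap.ext; intro z
    simp [mul_smul_comm, smul_mul_assoc]

def xiMap (m : H) : H ⊗[k] (H ⊗[k] H) →ₗ[k] H :=
  TensorProduct.lift ((TensorProduct.uncurry (RingHom.id k) H H H).comp (tri m))

@[simp] lemma xiMap_tmul (m x y z : H) :
    xiMap m (x ⊗ₜ[k] (y ⊗ₜ[k] z)) = z * (m * x) * S y := by
  simp [xiMap, tri, TensorProduct.uncurry_apply]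

lemma masterX (b m : H) {ι : Type*} (ra : Coalgebra.Repr k b ι) :
    ∑ i ∈ ra.index, adAct k H (ra.right i ⊗ₜ[k] (m * ra.left i)) = b * m := by
  classical
  set rr : ∀ i : ι, Coalgebra.Repr k (ra.right i) (H × H) := fun i => Coalgebra.Repr.arbitrary k _
  set rl : ∀ i : ι, Coalgebra.Repr k (ra.left i) (H × H) := fun i => Coalgebra.Repr.arbitrary k _
  have happ := congrArg (xiMap (k := k) (H := H) m) (Coalgebra.sum_tmul_tmul_eq (R := k) ra rl rr)
  rw [map_sum, map_sum] at happ
  simp only [map_sum, xiMap_tmul] at happ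
  calc ∑ i ∈ ra.index, adAct k H (ra.right i ⊗ₜ[k] (m * ra.left i))
      = ∑ i ∈ ra.index, ∑ j ∈ (rr i).index,
          (rr i).right j * (m * ra.left i) * S ((rr i).left j) := by
        refine Finset.sum_congr rfl fun i _ => adAct_tmul _ _ (rr i)
    _ = ∑ i ∈ ra.index, ∑ t ∈ (rl i).index,
          ra.right i * (m * (rl i).left t) * S ((rl i).right t) := happ.symm
    _ = ∑ i ∈ ra.index, (ra.right i * m) *
          ∑ t ∈ (rl i).index, (rl i).left t * S ((rl i).right t) := by
        refine Finset.sum_congr rfl fun i _ => ?_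
        rw [Finset.mul_sum]
        refine Finset.sum_congr rfl fun t _ => by
          rw [← mul_assoc, ← mul_assoc]
    _ = b * m := by
        simp only [fun i => HopfAlgebra.sum_mul_antipode_eq_smul (R := k) (rl i)]
        simp only [mul_smul_comm, mul_one]
        simp only [← smul_mul_assoc]
        rw [← Finset.sum_mul, sum_counit_smul' ra]

end XiMaps

section Galois

/-- the canonical-map composite from the Galois hypothesis -/
def FMap (I : Submodule k H) : H ⊗[k] H →ₗ[k] H ⊗[k] (H ⧸ I) :=
  (LinearMap.rTensor (H ⧸ I) (LinearMap.mul' k H)).comp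
    (((TensorProduct.assoc k H H (H ⧸ I)).symm.toLinearMap).comp
      (LinearMap.lTensor H
        ((LinearMap.lTensor H I.mkQ).comp (Coalgebra.comul (R := k)))))

def xiI (I : Submodule k H) : H ⊗[k] (H ⊗[k] H) →ₗ[k] H ⊗[k] (H ⧸ I) :=
  (LinearMap.rTensor (H ⧸ I) (LinearMap.mul' k H)) ∘ₗ
    ((TensorProduct.assoc k H H (H ⧸ I)).symm.toLinearMap) ∘ₗ
    (LinearMap.lTensor H (LinearMap.lTensor H I.mkQ)) ∘ₗ
    (LinearMap.rTensor (H ⊗[k] H) (HopfAlgebra.antipode (R := k)))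

@[simp] lemma xiI_tmul (I : Submodule k H) (a c d : H) :
    xiI I (a ⊗ₜ[k] (c ⊗ₜ[k] d)) = (S a * c) ⊗ₜ[k] I.mkQ d := by
  simp [xiI, LinearMap.mul'_apply]

lemma FMap_rTensor_antipode (I : Submodule k H) (x : H) :
    FMap I ((LinearMap.rTensor H (HopfAlgebra.antipode (R := k))) (Coalgebra.comul (R := k) x))
      = (1 : H) ⊗ₜ[k] I.mkQ x := by
  classical
  set r := Coalgebra.Repr.arbitrary k x
  set rl : ∀ i : H × H, Coalgebra.Repr k (r.left i) (H × H) := fun i => Coalgebra.Repr.arbitrary k _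
  set rr : ∀ i : H × H, Coalgebra.Repr k (r.right i) (H × H) := fun i => Coalgebra.Repr.arbitrary k _
  have happ := congrArg (xiI (k := k) (H := H) I) (Coalgebra.sum_tmul_tmul_eq (R := k) r rl rr)
  rw [map_sum, map_sum] at happ
  simp only [map_sum, xiI_tmul] at happ
  have hL : FMap I ((LinearMap.rTensor H (HopfAlgebra.antipode (R := k)))
      (Coalgebra.comul (R := k) x)) =
      ∑ i ∈ r.index, ∑ j ∈ (rr i).index,
        (S (r.left i) * (rr i).left j) ⊗ₜ[k] I.mkQ ((rr i).right j) := by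
    rw [← r.eq, map_sum, map_sum]
    refine Finset.sum_congr rfl fun i _ => ?_
    rw [LinearMap.rTensor_tmul]
    simp only [FMap, LinearMap.comp_apply, LinearMap.lTensor_tmul]
    rw [← (rr i).eq]
    rw [map_sum, TensorProduct.tmul_sum, map_sum, map_sum]
    refine Finset.sum_congr rfl fun j _ => ?_
    simp [LinearMap.mul'_apply]
  rw [hL, ← happ]
  calc ∑ i ∈ r.index, ∑ t ∈ (rl i).index,
        (S ((rl i).left t) * (rl i).right t) ⊗ₜ[k] I.mkQ (r.right i)
      = ∑ i ∈ r.index, (algebraMap k H (Coalgebra.counit (R := k) (r.left i)))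
          ⊗ₜ[k] I.mkQ (r.right i) := by
        refine Finset.sum_congr rfl fun i _ => ?_
        rw [← TensorProduct.sum_tmul, HopfAlgebra.sum_antipode_mul_eq_algebraMap_counit (R := k) (rl i)]
    _ = (1 : H) ⊗ₜ[k] I.mkQ x := by
        have : ∀ i, (algebraMap k H (Coalgebra.counit (R := k) (r.left i)))
            ⊗ₜ[k] I.mkQ (r.right i) =
            (1 : H) ⊗ₜ[k] (Coalgebra.counit (R := k) (r.left i) • I.mkQ (r.right i)) := fun i => by
          rw [Algebra.algebraMap_eq_smul_one, TensorProduct.smul_tmul]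
        simp only [this]
        rw [← TensorProduct.tmul_sum]
        congr 1
        simp only [← map_smul]
        rw [← map_sum, sum_counit_smul' r]

lemma coinv_sub_mem {I : Submodule k H} {b : H} (hb : IsCoinvariant k H I b) :
    ∃ τ : H ⊗[k] I, (LinearMap.lTensor H I.subtype) τ
      = Coalgebra.comul (R := k) b - b ⊗ₜ[k] (1 : H) := by
  have hker : (LinearMap.lTensor H I.mkQ) (Coalgebra.comul (R := k) b - b ⊗ₜ[k] (1 : H)) = 0 := by
    rw [map_sub, hb, LinearMap.lTensor_tmul, sub_self]
  have hexact := Module.Flat.lTensor_exact (M := H) (R := k)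
    (LinearMap.exact_subtype_mkQ I)
  exact (hexact _).mp hker

/-- the key commutator identity: for a coinvariant `b`, the commutator `m*b - b*m` lies in
any submodule-pullback containing the image of the adjoint action of `I`. -/
lemma keyComm {I : Submodule k H} {b : H} (hb : IsCoinvariant k H I b)
    {W : Type u} [AddCommGroup W] [Module k W] (f : H →ₗ[k] W) (P : Submodule k W)
    (hP : ∀ x ∈ I, ∀ u : H, f (adAct k H (x ⊗ₜ[k] u)) ∈ P) (m : H) :
    f (m * b - b * m) ∈ P := by
  classical
  obtain ⟨τ, hτ⟩ := coinv_sub_mem hb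
  have hA : adAct k H ((TensorProduct.comm k H H)
      ((LinearMap.rTensor H (LinearMap.mulLeft k m)) (Coalgebra.comul (R := k) b))) = b * m := by
    set r := Coalgebra.Repr.arbitrary k b
    rw [← r.eq, map_sum, map_sum, map_sum]
    simp only [LinearMap.rTensor_tmul, TensorProduct.comm_tmul, LinearMap.mulLeft_apply]
    exact masterX b m r
  have hB : adAct k H ((TensorProduct.comm k H H)
      ((LinearMap.rTensor H (LinearMap.mulLeft k m)) (b ⊗ₜ[k] (1 : H)))) = m * b := by
    rw [LinearMap.rTensor_tmul, TensorProduct.comm_tmul, LinearMap.mulLeft_apply]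
    exact adAct_one_tmul (m * b)
  have hval : m * b - b * m = - adAct k H ((TensorProduct.comm k H H)
      ((LinearMap.rTensor H (LinearMap.mulLeft k m)) ((LinearMap.lTensor H I.subtype) τ))) := by
    rw [hτ, map_sub, map_sub, map_sub, hA, hB, neg_sub]
  have hmem : ∀ τ' : H ⊗[k] I, f (adAct k H ((TensorProduct.comm k H H)
      ((LinearMap.rTensor H (LinearMap.mulLeft k m))
        ((LinearMap.lTensor H I.subtype) τ')))) ∈ P := by
    intro τ'
    induction τ' using TensorProduct.induction_on with
    | zero => simpa using P.zero_mem
    | tmul a x =>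
        have := hP (x : H) x.2 (m * a)
        simpa [LinearMap.lTensor_tmul, LinearMap.rTensor_tmul, TensorProduct.comm_tmul,
          LinearMap.mulLeft_apply] using this
    | add u v hu hv =>
        simp only [map_add]
        exact P.add_mem hu hv
  rw [hval, map_neg]
  exact P.neg_mem (hmem τ)

end Galois

end

theorem jara_stefan_comparison
    {k : Type u} [Field k] {H : Type u} [Ring H] [HopfAlgebra k H]
    (I : Submodule k H) (hI : IsHopfIdeal k H I)
    -- homogeneous quotient-Hopf–Galois hypothesis: the canonical map is bijective
    (hGal : ∃ e : ((H ⊗[k] H) ⧸ Submodule.span k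
          {x : H ⊗[k] H | ∃ g g' b : H, IsCoinvariant k H I b ∧
            x = (g * b) ⊗ₜ[k] g' - g ⊗ₜ[k] (b * g')}) ≃ₗ[k] H ⊗[k] (H ⧸ I),
        ∀ x : H ⊗[k] H, e (Submodule.Quotient.mk x) =
          ((LinearMap.rTensor (H ⧸ I) (LinearMap.mul' k H)).comp
            (((TensorProduct.assoc k H H (H ⧸ I)).symm.toLinearMap).comp
              (LinearMap.lTensor H
                ((LinearMap.lTensor H I.mkQ).comp (Coalgebra.comul (R := k)))))) x) :
    -- `φ₀ : [H]_B ≃ (H/I) ⊗_H ad(H)`, `[h]_B ↦ π(1) ⊗_H h` ...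
    ∃ e : (H ⧸ commB k H I) ≃ₗ[k] (((H ⧸ I) ⊗[k] H) ⧸ relAdZero k H I),
      (∀ h : H, e (Submodule.Quotient.mk h) =
        Submodule.Quotient.mk ((I.mkQ 1) ⊗ₜ[k] h)) ∧
      -- ... is `H/I`-linear: Miyashita–Ulbrich action on the source, left multiplication
      -- (through `π`) on the first factor of the target
      (∀ h h' x m : H,
        e (Submodule.Quotient.mk h') =
            (Submodule.Quotient.mk (p := relAdZero k H I) ((I.mkQ x) ⊗ₜ[k] m)) →
        e (Submodule.Quotient.mk (adAct k H (h ⊗ₜ[k] h'))) =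
            Submodule.Quotient.mk ((I.mkQ (h * x)) ⊗ₜ[k] m)) ∧
      -- consequently `- ⊗_{H/I} [ad(H)]_B ≅ - ⊗_H ad(H)`:
      (∀ (N : Type u) [AddCommGroup N] [Module k N] (r : N →ₗ[k] H →ₗ[k] N),
        (∀ n : N, r n 1 = n) →
        (∀ (n : N) (g g' : H), r (r n g) g' = r n (g * g')) →
        (∀ (n : N), ∀ x ∈ I, r n x = 0) →
        ∃ e' : ((N ⊗[k] H) ⧸ relMU k H N r I) ≃ₗ[k] ((N ⊗[k] H) ⧸ relH k H N r),
          ∀ w : N ⊗[k] H,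
            e' (Submodule.Quotient.mk w) = Submodule.Quotient.mk w) := by
  classical
  obtain ⟨eg, heg⟩ := hGal
  -- Step 1: the adjoint action of `I` lands in the commutator space `[H,B]`.
  have K1 : ∀ x ∈ I, ∀ n : H, adAct k H (x ⊗ₜ[k] n) ∈ commB k H I := by
    intro x hx n
    have hFw : FMap I ((LinearMap.rTensor H (HopfAlgebra.antipode (R := k)))
        (Coalgebra.comul (R := k) x)) = 0 := by
      rw [FMap_rTensor_antipode]
      rw [show I.mkQ x = 0 from (Submodule.Quotient.mk_eq_zero I).mpr hx]
      rw [TensorProduct.tmul_zero]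
    have hw0 : Submodule.Quotient.mk (p := Submodule.span k
        {x : H ⊗[k] H | ∃ g g' b : H, IsCoinvariant k H I b ∧
          x = (g * b) ⊗ₜ[k] g' - g ⊗ₜ[k] (b * g')})
        ((LinearMap.rTensor H (HopfAlgebra.antipode (R := k)))
          (Coalgebra.comul (R := k) x)) = 0 := by
      apply eg.injective
      rw [heg, map_zero]
      exact hFw
    have hwJ := (Submodule.Quotient.mk_eq_zero _).mp hw0
    set G : H ⊗[k] H →ₗ[k] H := TensorProduct.lift (LinearMap.mk₂ k (fun g g' => g' * n * g)
      (fun g₁ g₂ g' => by simp [mul_add])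
      (fun c g g' => by simp [mul_smul_comm])
      (fun g g₁ g₂ => by simp [add_mul])
      (fun c g g' => by simp [smul_mul_assoc])) with hG
    have hle : Submodule.span k
        {x : H ⊗[k] H | ∃ g g' b : H, IsCoinvariant k H I b ∧
          x = (g * b) ⊗ₜ[k] g' - g ⊗ₜ[k] (b * g')} ≤
        Submodule.comap G (commB k H I) := by
      rw [Submodule.span_le]
      rintro y ⟨g, g', b, hbcoinv, rfl⟩
      simp only [SetLike.mem_coe, Submodule.mem_comap, map_sub]
      refine Submodule.subset_span ⟨g' * n * g, b, hbcoinv, ?_⟩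
      simp [hG, TensorProduct.lift.tmul, LinearMap.mk₂_apply, mul_assoc]
    have hGmem := Submodule.mem_comap.mp (hle hwJ)
    have hGw : G ((LinearMap.rTensor H (HopfAlgebra.antipode (R := k)))
        (Coalgebra.comul (R := k) x)) = adAct k H (x ⊗ₜ[k] n) := by
      set r := Coalgebra.Repr.arbitrary k x
      rw [adAct_tmul _ _ r, ← r.eq, map_sum, map_sum]
      refine Finset.sum_congr rfl fun i _ => ?_
      simp [hG, TensorProduct.lift.tmul, LinearMap.mk₂_apply]
    rwa [hGw] at hGmem
  -- the basic relation generators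
  have relI : ∀ x ∈ I, ∀ u : H,
      (I.mkQ 1) ⊗ₜ[k] adAct k H (x ⊗ₜ[k] u) ∈ relAdZero k H I := by
    intro x hx u
    have hgen : I.mkQ (1 * x) ⊗ₜ[k] u - I.mkQ 1 ⊗ₜ[k] adAct k H (x ⊗ₜ[k] u) ∈ relAdZero k H I :=
      Submodule.subset_span ⟨1, x, u, rfl⟩
    rw [one_mul, show I.mkQ x = 0 from (Submodule.Quotient.mk_eq_zero I).mpr hx,
      TensorProduct.zero_tmul, zero_sub] at hgen
    have := (relAdZero k H I).neg_mem hgen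
    rwa [neg_neg] at this
  -- construction of `ψ`
  have hψ₁ker : ∀ x ∈ I,
      (TensorProduct.curry ((commB k H I).mkQ ∘ₗ adAct k H)) x = 0 := by
    intro x hx
    apply LinearMap.ext; intro n
    simp only [TensorProduct.curry_apply, LinearMap.comp_apply, LinearMap.zero_apply,
      Submodule.mkQ_apply]
    exact (Submodule.Quotient.mk_eq_zero _).mpr (K1 x hx n)
  set ψ₂ : (H ⧸ I) ⊗[k] H →ₗ[k] H ⧸ commB k H I :=
    TensorProduct.lift (Submodule.liftQ I
      (TensorProduct.curry ((commB k H I).mkQ ∘ₗ adAct k H))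
      (fun x hx => by simpa [LinearMap.mem_ker] using hψ₁ker x hx)) with hψ₂
  have ψ₂tmul : ∀ (v n : H), ψ₂ (I.mkQ v ⊗ₜ[k] n)
      = (commB k H I).mkQ (adAct k H (v ⊗ₜ[k] n)) := by
    intro v n
    simp [hψ₂, TensorProduct.lift.tmul]
  have hrelker : relAdZero k H I ≤ LinearMap.ker ψ₂ := by
    unfold relAdZero
    rw [Submodule.span_le]
    rintro y ⟨v, p, m, rfl⟩
    simp only [SetLike.mem_coe, LinearMap.mem_ker, map_sub]
    rw [ψ₂tmul, ψ₂tmul, adAct_mul_tmul, sub_self]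
  set ψ : (((H ⧸ I) ⊗[k] H) ⧸ relAdZero k H I) →ₗ[k] H ⧸ commB k H I :=
    Submodule.liftQ (relAdZero k H I) ψ₂ hrelker with hψ
  -- construction of `φ`
  set φ₀ : H →ₗ[k] (H ⧸ I) ⊗[k] H := (TensorProduct.mk k (H ⧸ I) H) (I.mkQ 1) with hφ₀
  have hφker : commB k H I ≤ LinearMap.ker ((relAdZero k H I).mkQ ∘ₗ φ₀) := by
    unfold commB
    rw [Submodule.span_le]
    rintro y ⟨h, b, hbcoinv, rfl⟩
    simp only [SetLike.mem_coe, LinearMap.mem_ker, LinearMap.comp_apply, Submodule.mkQ_apply]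
    rw [Submodule.Quotient.mk_eq_zero]
    exact keyComm hbcoinv φ₀ (relAdZero k H I) (fun x hx u => relI x hx u) h
  set φ : (H ⧸ commB k H I) →ₗ[k] (((H ⧸ I) ⊗[k] H) ⧸ relAdZero k H I) :=
    Submodule.liftQ (commB k H I) ((relAdZero k H I).mkQ ∘ₗ φ₀) hφker with hφ
  -- the basic computation: `[π(1) ⊗ v ▷ n] = [π(v) ⊗ n]`
  have hgen1 : ∀ (v n : H), Submodule.Quotient.mk (p := relAdZero k H I)
      (I.mkQ 1 ⊗ₜ[k] adAct k H (v ⊗ₜ[k] n)) =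
      Submodule.Quotient.mk (I.mkQ v ⊗ₜ[k] n) := by
    intro v n
    rw [Submodule.Quotient.eq]
    have hg : I.mkQ (1 * v) ⊗ₜ[k] n - I.mkQ 1 ⊗ₜ[k] adAct k H (v ⊗ₜ[k] n) ∈ relAdZero k H I :=
      Submodule.subset_span ⟨1, v, n, rfl⟩
    rw [one_mul] at hg
    have := (relAdZero k H I).neg_mem hg
    rwa [neg_sub] at this
  have hφψ : φ ∘ₗ ψ = LinearMap.id := by
    apply Submodule.linearMap_qext
    apply TensorProduct.ext'
    intro vq n
    obtain ⟨v, rfl⟩ := Submodule.Quotient.mk_surjective I vq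
    simp only [LinearMap.comp_apply, Submodule.mkQ_apply, LinearMap.id_apply]
    have e1 : ψ (Submodule.Quotient.mk ((Submodule.Quotient.mk v : H ⧸ I) ⊗ₜ[k] n))
        = (commB k H I).mkQ (adAct k H (v ⊗ₜ[k] n)) := by
      rw [hψ, Submodule.liftQ_apply]
      exact ψ₂tmul v n
    rw [e1, hφ, Submodule.mkQ_apply, Submodule.liftQ_apply]
    simp only [LinearMap.comp_apply, Submodule.mkQ_apply]
    have : φ₀ (adAct k H (v ⊗ₜ[k] n)) = I.mkQ 1 ⊗ₜ[k] adAct k H (v ⊗ₜ[k] n) := rfl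
    rw [this, hgen1]
    rfl
  have hψφ : ψ ∘ₗ φ = LinearMap.id := by
    apply Submodule.linearMap_qext
    apply LinearMap.ext; intro h
    simp only [LinearMap.comp_apply, Submodule.mkQ_apply, LinearMap.id_apply]
    rw [hφ, Submodule.liftQ_apply]
    simp only [LinearMap.comp_apply, Submodule.mkQ_apply]
    have : φ₀ h = I.mkQ 1 ⊗ₜ[k] h := rfl
    rw [this, hψ, Submodule.liftQ_apply]
    have e2 : ψ₂ (I.mkQ 1 ⊗ₜ[k] h) = (commB k H I).mkQ (adAct k H ((1:H) ⊗ₜ[k] h)) :=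
      ψ₂tmul 1 h
    rw [e2, adAct_one_tmul, Submodule.mkQ_apply]
  set e : (H ⧸ commB k H I) ≃ₗ[k] (((H ⧸ I) ⊗[k] H) ⧸ relAdZero k H I) :=
    LinearEquiv.ofLinear φ ψ hφψ hψφ with he
  have prop1 : ∀ h : H, e (Submodule.Quotient.mk h) =
      Submodule.Quotient.mk (I.mkQ 1 ⊗ₜ[k] h) := by
    intro h
    rw [he, LinearEquiv.ofLinear_apply, hφ, Submodule.liftQ_apply]
    rfl
  refine ⟨e, prop1, ?_, ?_⟩
  · intro h h' x m hyp
    have hLqb : I ≤ Submodule.comap (LinearMap.mulLeft k h) I := by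
      intro y hy
      simpa using hI.2.1 y hy h
    set Lq : (H ⧸ I) →ₗ[k] (H ⧸ I) := Submodule.mapQ I I (LinearMap.mulLeft k h) hLqb with hLq
    set LT : (H ⧸ I) ⊗[k] H →ₗ[k] (H ⧸ I) ⊗[k] H := LinearMap.rTensor H Lq with hLT
    have hstab : relAdZero k H I ≤ Submodule.comap LT (relAdZero k H I) := by
      conv_lhs => rw [relAdZero]
      rw [Submodule.span_le]
      rintro y ⟨v, p, m', rfl⟩
      simp only [SetLike.mem_coe, Submodule.mem_comap, map_sub]
      rw [hLT]
      rw [LinearMap.rTensor_tmul, LinearMap.rTensor_tmul, hLq]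
      simp only [Submodule.mkQ_apply, Submodule.mapQ_apply, LinearMap.mulLeft_apply]
      refine Submodule.subset_span ⟨h * v, p, m', ?_⟩
      rw [mul_assoc]
      rfl
    set LTbar := Submodule.mapQ (relAdZero k H I) (relAdZero k H I) LT hstab with hLTbar
    have had : e (Submodule.Quotient.mk (adAct k H (h ⊗ₜ[k] h'))) =
        Submodule.Quotient.mk (I.mkQ h ⊗ₜ[k] h') := by
      rw [prop1, hgen1]
    rw [had]
    have hLT1 : LT (I.mkQ 1 ⊗ₜ[k] h') = I.mkQ h ⊗ₜ[k] h' := by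
      rw [hLT, LinearMap.rTensor_tmul, hLq]
      simp only [Submodule.mkQ_apply, Submodule.mapQ_apply, LinearMap.mulLeft_apply, mul_one]
    have h1 : Submodule.Quotient.mk (p := relAdZero k H I) (I.mkQ h ⊗ₜ[k] h') =
        LTbar (Submodule.Quotient.mk (I.mkQ 1 ⊗ₜ[k] h')) := by
      rw [hLTbar, Submodule.mapQ_apply, hLT1]
    have hLTx : LT (I.mkQ x ⊗ₜ[k] m) = I.mkQ (h * x) ⊗ₜ[k] m := by
      rw [hLT, LinearMap.rTensor_tmul, hLq]
      simp only [Submodule.mkQ_apply, Submodule.mapQ_apply, LinearMap.mulLeft_apply]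
    rw [h1, ← prop1 h', hyp, hLTbar, Submodule.mapQ_apply, hLTx]
  · intro N instAG instM r hr1 hr2 hr0
    have relHI : ∀ (n : N), ∀ x ∈ I, ∀ u : H,
        n ⊗ₜ[k] adAct k H (x ⊗ₜ[k] u) ∈ relH k H N r := by
      intro n x hx u
      have hgen : (r n x) ⊗ₜ[k] u - n ⊗ₜ[k] adAct k H (x ⊗ₜ[k] u) ∈ relH k H N r :=
        Submodule.subset_span ⟨n, x, u, rfl⟩
      rw [hr0 n x hx, TensorProduct.zero_tmul, zero_sub] at hgen
      have := (relH k H N r).neg_mem hgen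
      rwa [neg_neg] at this
    have heq : relMU k H N r I = relH k H N r := by
      apply le_antisymm
      · unfold relMU
        rw [Submodule.span_le]
        rintro y (⟨n, p, m, rfl⟩ | ⟨n, m, b, hbcoinv, rfl⟩)
        · exact Submodule.subset_span ⟨n, p, m, rfl⟩
        · exact keyComm hbcoinv ((TensorProduct.mk k N H) n) (relH k H N r)
            (fun x hx u => relHI n x hx u) m
      · unfold relH relMU
        exact Submodule.span_mono Set.subset_union_left
    exact ⟨Submodule.quotEquivOfEq _ _ heq, fun w => Submodule.quotEquivOfEq_mk _ _ heq w⟩
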